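/- arXiv:1507.08124 — 2 statements merged into one kernel-verified Lean document; each statement's English description precedes it below -/
import Mathlib

section
/- Let g ∈ L¹([0,1]), R > 0 and H_R ∈ L^∞([0,1]) such that |f(t,u)| ≤ H_R(t) for a.e. t and all u ∈ [−R,R], with ‖H_R‖_∞·(M₁ + M₂) ≤ R, where M₁ = sup_t ∫₀¹ k(t,s)|g(s)|ds and M₂ = sup_t ∫₀¹ |∂k/∂t(t,s)||g(s)|ds. Assume t ↦ f(t,u(t)) is measurable for each u in the closed ball B̄_R of C¹([0,1]). Then the operator Tu(t) = ∫₀¹ k(t,s)g(s)f(s,u(s))ds is well defined and maps B̄_R into B̄_R, where the norm on C¹([0,1]) is ‖u‖ = sup|u| + sup|u'|. -/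
open MeasureTheory intervalIntegral

/-- The Green's function for `u'' = 0` with separated boundary conditions. -/
noncomputable def greenK (α β γ δ : ℝ) (t s : ℝ) : ℝ :=
  if s ≤ t then (γ + δ - γ * t) * (β + α * s) / (γ * β + α * γ + α * δ)
  else (β + α * t) * (γ + δ - γ * s) / (γ * β + α * γ + α * δ)

/-- The partial derivative `∂k/∂t` of the Green's function, defined piecewise. -/
noncomputable def greenKt (α β γ δ : ℝ) (t s : ℝ) : ℝ :=
  if s < t then (-γ) * (β + α * s) / (γ * β + α * γ + α * δ)
  else α * (γ + δ - γ * s) / (γ * β + α * γ + α * δ)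

/-- The `C¹([0,1])` norm `‖u‖ = sup |u| + sup |u'|`. -/
noncomputable def normC1 (u : ℝ → ℝ) : ℝ :=
  sSup ((fun t => |u t|) '' Set.Icc (0 : ℝ) 1) +
    sSup ((fun t => |deriv u t|) '' Set.Icc (0 : ℝ) 1)

/-- Membership in the closed ball `B̄_R` of `C¹([0,1])`. -/
noncomputable def memBallC1 (R : ℝ) (u : ℝ → ℝ) : Prop :=
  ContinuousOn u (Set.Icc (0 : ℝ) 1) ∧
  (∀ t ∈ Set.Icc (0 : ℝ) 1, DifferentiableAt ℝ u t) ∧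
  ContinuousOn (deriv u) (Set.Icc (0 : ℝ) 1) ∧
  normC1 u ≤ R

/-- The constant `M₁ = sup_t ∫₀¹ k(t,s)|g(s)| ds`. -/
noncomputable def Mone (α β γ δ : ℝ) (g : ℝ → ℝ) : ℝ :=
  ⨆ t : Set.Icc (0 : ℝ) 1, ∫ s in (0 : ℝ)..1, greenK α β γ δ t s * |g s|

/-- The constant `M₂ = sup_t ∫₀¹ |∂k/∂t(t,s)||g(s)| ds`. -/
noncomputable def Mtwo (α β γ δ : ℝ) (g : ℝ → ℝ) : ℝ :=
  ⨆ t : Set.Icc (0 : ℝ) 1, ∫ s in (0 : ℝ)..1, |greenKt α β γ δ t s| * |g s|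

/-- The Hammerstein integral operator `Tu(t) = ∫₀¹ k(t,s) g(s) f(s,u(s)) ds`. -/
noncomputable def hammOp (α β γ δ : ℝ) (g : ℝ → ℝ) (f : ℝ → ℝ → ℝ)
    (u : ℝ → ℝ) : ℝ → ℝ :=
  fun t => ∫ s in (0 : ℝ)..1, greenK α β γ δ t s * g s * f s (u s)

lemma greenK_nonneg {α β γ δ : ℝ} (hα : 0 ≤ α) (hβ : 0 ≤ β) (hγ : 0 ≤ γ) (hδ : 0 ≤ δ)
    (hΓ : 0 < γ * β + α * γ + α * δ) {t s : ℝ}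
    (ht : t ∈ Set.Icc (0:ℝ) 1) (hs : s ∈ Set.Icc (0:ℝ) 1) :
    0 ≤ greenK α β γ δ t s := by
  obtain ⟨ht0, ht1⟩ := ht; obtain ⟨hs0, hs1⟩ := hs
  unfold greenK
  split <;> apply div_nonneg _ hΓ.le
  · exact mul_nonneg (by nlinarith) (by nlinarith)
  · exact mul_nonneg (by nlinarith) (by nlinarith)

lemma greenK_le {α β γ δ : ℝ} (hα : 0 ≤ α) (hβ : 0 ≤ β) (hγ : 0 ≤ γ) (hδ : 0 ≤ δ)
    (hΓ : 0 < γ * β + α * γ + α * δ) {t s : ℝ}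
    (ht : t ∈ Set.Icc (0:ℝ) 1) (hs : s ∈ Set.Icc (0:ℝ) 1) :
    greenK α β γ δ t s ≤ (γ + δ) * (β + α) / (γ * β + α * γ + α * δ) := by
  obtain ⟨ht0, ht1⟩ := ht; obtain ⟨hs0, hs1⟩ := hs
  unfold greenK
  split <;> gcongr (?_ : ℝ) / _ <;> nlinarith [mul_nonneg (mul_nonneg hγ ht0) hβ,
    mul_nonneg (mul_nonneg (mul_nonneg hγ ht0) hα) hs0,
    mul_nonneg (mul_nonneg (add_nonneg hγ hδ) hα) (sub_nonneg.mpr hs1),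
    mul_nonneg (mul_nonneg hγ hs0) hβ,
    mul_nonneg (mul_nonneg (mul_nonneg hγ hs0) hα) ht0,
    mul_nonneg (mul_nonneg (add_nonneg hγ hδ) hα) (sub_nonneg.mpr ht1)]

lemma greenKt_abs_le {α β γ δ : ℝ} (hα : 0 ≤ α) (hβ : 0 ≤ β) (hγ : 0 ≤ γ) (hδ : 0 ≤ δ)
    (hΓ : 0 < γ * β + α * γ + α * δ) {t s : ℝ}
    (ht : t ∈ Set.Icc (0:ℝ) 1) (hs : s ∈ Set.Icc (0:ℝ) 1) :
    |greenKt α β γ δ t s| ≤ (γ * (β + α) + α * (γ + δ)) / (γ * β + α * γ + α * δ) := by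
  obtain ⟨ht0, ht1⟩ := ht; obtain ⟨hs0, hs1⟩ := hs
  unfold greenKt
  split <;> rw [abs_div, abs_of_pos hΓ, abs_mul] <;> gcongr (?_ : ℝ) / _
  · rw [abs_neg, abs_of_nonneg hγ, abs_of_nonneg (by nlinarith : (0:ℝ) ≤ β + α * s)]
    nlinarith [mul_nonneg (mul_nonneg hγ hα) (sub_nonneg.mpr hs1), mul_nonneg hα (add_nonneg hγ hδ)]
  · rw [abs_of_nonneg hα, abs_of_nonneg (by nlinarith : (0:ℝ) ≤ γ + δ - γ * s)]
    nlinarith [mul_nonneg (mul_nonneg hα hγ) hs0, mul_nonneg hγ (add_nonneg hβ hα)]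

lemma greenK_measurable (α β γ δ t : ℝ) : Measurable (fun s => greenK α β γ δ t s) := by
  unfold greenK
  exact Measurable.ite measurableSet_Iic (by fun_prop) (by fun_prop)

lemma greenKt_measurable (α β γ δ t : ℝ) : Measurable (fun s => greenKt α β γ δ t s) := by
  unfold greenKt
  exact Measurable.ite measurableSet_Iio (by fun_prop) (by fun_prop)
theorem hammOp_well_defined_maps_ball
    (α β γ δ : ℝ) (hα : 0 ≤ α) (hβ : 0 ≤ β) (hγ : 0 ≤ γ) (hδ : 0 ≤ δ)
    (hΓ : 0 < γ * β + α * γ + α * δ)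
    (g : ℝ → ℝ) (f : ℝ → ℝ → ℝ) (R : ℝ) (hR : 0 < R)
    (H : ℝ → ℝ) (CH : ℝ)
    -- (H₁)
    (hg : IntegrableOn g (Set.Icc (0 : ℝ) 1))
    -- (H₂): `H` is an `L^∞` bound for `f` on `[-R, R]`
    (hHmeas : Measurable H)
    (hH : ∀ᵐ t ∂(volume.restrict (Set.Icc (0 : ℝ) 1)),
      ∀ x ∈ Set.Icc (-R) R, |f t x| ≤ H t)
    (hHC : ∀ᵐ t ∂(volume.restrict (Set.Icc (0 : ℝ) 1)), |H t| ≤ CH)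
    -- (H₃): `‖H‖_∞ (M₁ + M₂) ≤ R`
    (hRC : CH * (Mone α β γ δ g + Mtwo α β γ δ g) ≤ R)
    -- (H₄)
    (hmeas : ∀ u : ℝ → ℝ, memBallC1 R u →
      AEMeasurable (fun t => f t (u t)) (volume.restrict (Set.Icc (0 : ℝ) 1))) :
    ∀ u : ℝ → ℝ, memBallC1 R u →
      (∀ t ∈ Set.Icc (0 : ℝ) 1,
        IntervalIntegrable (fun s => greenK α β γ δ t s * g s * f s (u s))
          volume 0 1) ∧
      memBallC1 R (hammOp α β γ δ g f u) := by

  intro u hu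
  have hΓ0 : (γ * β + α * γ + α * δ) ≠ 0 := ne_of_gt hΓ
  obtain ⟨hu1, hu2, hu3, hu4⟩ := hu
  have hu' : memBallC1 R u := ⟨hu1, hu2, hu3, hu4⟩
  have hBdd1 : BddAbove ((fun t => |u t|) '' Set.Icc (0:ℝ) 1) :=
    isCompact_Icc.bddAbove_image hu1.abs
  have hBdd2 : BddAbove ((fun t => |deriv u t|) '' Set.Icc (0:ℝ) 1) :=
    isCompact_Icc.bddAbove_image hu3.abs
  have hub : ∀ s ∈ Set.Icc (0:ℝ) 1, u s ∈ Set.Icc (-R) R := by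
    intro s hs
    have h1 : |u s| ≤ sSup ((fun t => |u t|) '' Set.Icc (0:ℝ) 1) :=
      le_csSup hBdd1 ⟨s, hs, rfl⟩
    have h2 : (0:ℝ) ≤ sSup ((fun t => |deriv u t|) '' Set.Icc (0:ℝ) 1) :=
      le_trans (abs_nonneg _) (le_csSup hBdd2 ⟨0, by norm_num, rfl⟩)
    have h3 := hu4
    unfold normC1 at h3
    exact Set.mem_Icc.mpr (abs_le.mp (by linarith))
  have hresne : volume.restrict (Set.Icc (0:ℝ) 1) ≠ 0 := by
    intro h
    rw [Measure.restrict_eq_zero] at h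
    simp [Real.volume_Icc] at h
  have hCH0 : 0 ≤ CH := by
    haveI : (ae (volume.restrict (Set.Icc (0:ℝ) 1))).NeBot := ae_neBot.mpr hresne
    obtain ⟨t, ht⟩ := hHC.exists
    linarith [abs_nonneg (H t)]
  set W : ℝ → ℝ := fun s => g s * f s (u s) with hWdef
  have hae : ∀ᵐ s ∂(volume.restrict (Set.Icc (0:ℝ) 1)), ‖W s‖ ≤ CH * |g s| := by
    filter_upwards [hH, hHC, ae_restrict_mem measurableSet_Icc] with s h1 h2 h3
    have h4 := h1 (u s) (hub s h3)
    have h5 : H s ≤ CH := (le_abs_self _).trans h2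
    simp only [hWdef, Real.norm_eq_abs, abs_mul]
    calc |g s| * |f s (u s)| ≤ |g s| * H s := mul_le_mul_of_nonneg_left h4 (abs_nonneg _)
      _ ≤ |g s| * CH := mul_le_mul_of_nonneg_left h5 (abs_nonneg _)
      _ = CH * |g s| := mul_comm _ _
  have hWmeas : AEStronglyMeasurable W (volume.restrict (Set.Icc (0:ℝ) 1)) :=
    (hg.aemeasurable.mul (hmeas u hu')).aestronglyMeasurable
  have hWint : IntegrableOn W (Set.Icc (0:ℝ) 1) :=
    Integrable.mono' (hg.abs.const_mul CH) hWmeas hae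
  set w : ℝ → ℝ := (Set.Icc (0:ℝ) 1).indicator W with hwdef
  have hwint : Integrable w := hWint.integrable_indicator measurableSet_Icc
  have hwabs : Integrable (fun s => |w s|) := hwint.abs
  have hw0 : ∀ s, s ∉ Set.Icc (0:ℝ) 1 → w s = 0 := fun s hs => Set.indicator_of_notMem hs _
  have hwW : ∀ s ∈ Set.Icc (0:ℝ) 1, w s = W s := fun s hs => Set.indicator_of_mem hs _
  have hmul : ∀ c : ℝ → ℝ, Continuous c → Integrable (fun s => c s * w s) := by
    intro c hc
    have hcw : (fun s => c s * w s) = (Set.Icc (0:ℝ) 1).indicator (fun s => c s * W s) := by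
      funext s
      by_cases hs : s ∈ Set.Icc (0:ℝ) 1
      · rw [Set.indicator_of_mem hs, hwW s hs]
      · rw [Set.indicator_of_notMem hs, hw0 s hs, mul_zero]
    rw [hcw]
    obtain ⟨C, hC⟩ := isCompact_Icc.exists_bound_of_continuousOn hc.continuousOn
    have h5 : IntegrableOn (fun s => c s * W s) (Set.Icc (0:ℝ) 1) := by
      refine Integrable.bdd_mul (c := C) hWint hc.aestronglyMeasurable ?_
      filter_upwards [ae_restrict_mem measurableSet_Icc] with s hs using hC s hs
    exact h5.integrable_indicator measurableSet_Icc
  have hψw : Integrable (fun s => (β + α * s) * w s) :=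
    hmul _ (continuous_const.add (continuous_const.mul continuous_id))
  have hφw : Integrable (fun s => (γ + δ - γ * s) * w s) :=
    hmul _ (continuous_const.sub (continuous_const.mul continuous_id))
  set P : ℝ → ℝ := fun t => ∫ s in (0:ℝ)..t, (β + α * s) * w s with hPdef
  set Q : ℝ → ℝ := fun t => ∫ s in (0:ℝ)..t, (γ + δ - γ * s) * w s with hQdef
  have hPc : Continuous P := hψw.continuous_primitive 0
  have hQc : Continuous Q := hφw.continuous_primitive 0
  have hne : ∀ c : ℝ, ∀ᵐ x : ℝ, x ≠ c := fun c => by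
    rw [ae_iff]
    simp only [not_not, Set.setOf_eq_eq_singleton]
    exact measure_singleton c
  have hvanish : ∀ (c : ℝ → ℝ) (a b : ℝ), (∀ᵐ x : ℝ, x ∈ Set.uIoc a b → w x = 0) →
      (∫ s in a..b, c s * w s) = 0 := by
    intro c a b h
    calc (∫ s in a..b, c s * w s) = ∫ s in a..b, (0:ℝ) := by
          refine integral_congr_ae ?_
          filter_upwards [h] with x hx hmem
          rw [hx hmem, mul_zero]
      _ = 0 := by simp
  have hP0 : ∀ t ≤ (0:ℝ), P t = 0 := by
    intro t ht
    refine hvanish _ 0 t ?_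
    filter_upwards [hne 0] with x hx0 hmem
    rw [Set.uIoc_of_ge ht] at hmem
    exact hw0 x (fun hc => hx0 (le_antisymm hmem.2 hc.1))
  have hQ0 : ∀ t ≤ (0:ℝ), Q t = 0 := by
    intro t ht
    refine hvanish _ 0 t ?_
    filter_upwards [hne 0] with x hx0 hmem
    rw [Set.uIoc_of_ge ht] at hmem
    exact hw0 x (fun hc => hx0 (le_antisymm hmem.2 hc.1))
  have hP1 : ∀ t, (1:ℝ) ≤ t → P t = P 1 := by
    intro t ht
    have h1 : P t - P 1 = ∫ s in (1:ℝ)..t, (β + α * s) * w s :=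
      integral_interval_sub_left (hψw.intervalIntegrable) (hψw.intervalIntegrable)
    have h2 : (∫ s in (1:ℝ)..t, (β + α * s) * w s) = 0 := by
      refine hvanish _ 1 t ?_
      refine Filter.Eventually.of_forall fun x hmem => ?_
      rw [Set.uIoc_of_le ht] at hmem
      exact hw0 x (fun hc => absurd hc.2 (not_le.mpr hmem.1))
    linarith
  have hQ1 : ∀ t, (1:ℝ) ≤ t → Q t = Q 1 := by
    intro t ht
    have h1 : Q t - Q 1 = ∫ s in (1:ℝ)..t, (γ + δ - γ * s) * w s :=
      integral_interval_sub_left (hφw.intervalIntegrable) (hφw.intervalIntegrable)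
    have h2 : (∫ s in (1:ℝ)..t, (γ + δ - γ * s) * w s) = 0 := by
      refine hvanish _ 1 t ?_
      refine Filter.Eventually.of_forall fun x hmem => ?_
      rw [Set.uIoc_of_le ht] at hmem
      exact hw0 x (fun hc => absurd hc.2 (not_le.mpr hmem.1))
    linarith
  set TT : ℝ → ℝ := fun t => ((γ + δ - γ * t) * P t + (β + α * t) * (Q 1 - Q t)) /
    (γ * β + α * γ + α * δ) with hTTdef
  set DD : ℝ → ℝ := fun t => ((-γ) * P t + α * (Q 1 - Q t)) / (γ * β + α * γ + α * δ) with hDDdef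
  have hTTc : Continuous TT := by
    apply Continuous.div_const
    exact ((continuous_const.sub (continuous_const.mul continuous_id)).mul hPc).add
      (((continuous_const.add (continuous_const.mul continuous_id))).mul
        (continuous_const.sub hQc))
  have hDDc : Continuous DD := by
    apply Continuous.div_const
    exact (continuous_const.mul hPc).add (continuous_const.mul (continuous_const.sub hQc))
  have hder : ∀ t₀ : ℝ, HasDerivAt TT (DD t₀) t₀ := by
    intro t₀
    rw [hasDerivAt_iff_isLittleO]
    have key : ∀ t : ℝ, TT t - TT t₀ - (t - t₀) * DD t₀ = ∫ s in t₀..t, (s - t) * w s := by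
      intro t
      have h1 : P t - P t₀ = ∫ s in t₀..t, (β + α * s) * w s :=
        integral_interval_sub_left (hψw.intervalIntegrable) (hψw.intervalIntegrable)
      have h2 : Q t - Q t₀ = ∫ s in t₀..t, (γ + δ - γ * s) * w s :=
        integral_interval_sub_left (hφw.intervalIntegrable) (hφw.intervalIntegrable)
      have h3 : (1 / (γ * β + α * γ + α * δ)) *
          ((γ + δ - γ * t) * (P t - P t₀) - (β + α * t) * (Q t - Q t₀))
          = ∫ s in t₀..t, (s - t) * w s := by
        rw [h1, h2, ← intervalIntegral.integral_const_mul, ← intervalIntegral.integral_const_mul,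
          ← integral_sub ((hψw.intervalIntegrable).const_mul _)
            ((hφw.intervalIntegrable).const_mul _), ← intervalIntegral.integral_const_mul]
        refine integral_congr fun s _ => ?_
        simp only [one_div]; rw [inv_mul_eq_iff_eq_mul₀ hΓ0]
        ring
      rw [← h3]
      simp only [hTTdef, hDDdef]
      field_simp
      ring
    rw [Asymptotics.isLittleO_iff]
    intro ε hε
    have hA : Filter.Tendsto (fun t => ∫ s in t₀..t, |w s|) (nhds t₀) (nhds 0) := by
      have h7 := (hwabs.continuous_primitive t₀).tendsto t₀
      simpa using h7
    have h6 : ∀ᶠ t in nhds t₀, |(∫ s in t₀..t, |w s|)| < ε := by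
      have h7 := Metric.tendsto_nhds.mp hA ε hε
      simpa [Real.dist_eq] using h7
    filter_upwards [h6] with t ht
    rw [smul_eq_mul, key t]
    have hb1 : ‖∫ s in t₀..t, (s - t) * w s‖ ≤ |(∫ s in t₀..t, |t - t₀| * |w s|)| := by
      refine norm_integral_le_abs_of_norm_le ?_ ((hwabs.intervalIntegrable).const_mul _)
      filter_upwards [ae_restrict_mem measurableSet_uIoc] with s hs
      rw [Real.norm_eq_abs, abs_mul]
      have hs' : |s - t| ≤ |t - t₀| := by
        rcases le_total t₀ t with h | h
        · rw [Set.uIoc_of_le h] at hs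
          rw [abs_of_nonpos (by linarith [hs.2] : s - t ≤ 0), abs_of_nonneg (by linarith : (0:ℝ) ≤ t - t₀)]
          linarith [hs.1]
        · rw [Set.uIoc_of_ge h] at hs
          rw [abs_of_nonneg (by linarith [hs.1] : (0:ℝ) ≤ s - t), abs_of_nonpos (by linarith : t - t₀ ≤ 0)]
          linarith [hs.2]
      exact mul_le_mul_of_nonneg_right hs' (abs_nonneg _)
    calc ‖∫ s in t₀..t, (s - t) * w s‖ ≤ |(∫ s in t₀..t, |t - t₀| * |w s|)| := hb1
      _ = |t - t₀| * |(∫ s in t₀..t, |w s|)| := by rw [intervalIntegral.integral_const_mul, abs_mul, abs_abs]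
      _ ≤ |t - t₀| * ε := mul_le_mul_of_nonneg_left ht.le (abs_nonneg _)
      _ = ε * ‖t - t₀‖ := by rw [Real.norm_eq_abs]; ring
  have hderiv_eq : deriv TT = DD := funext fun t => (hder t).deriv
  have hwW' : ∀ s ∈ Set.Icc (0:ℝ) 1, w s = g s * f s (u s) := fun s hs => by
    rw [hwW s hs, hWdef]
  have hcong : ∀ t : ℝ, hammOp α β γ δ g f u t = ∫ s in (0:ℝ)..1, greenK α β γ δ t s * w s := by
    intro t
    unfold hammOp
    refine integral_congr fun s hs => ?_
    rw [Set.uIcc_of_le (by norm_num : (0:ℝ) ≤ 1)] at hs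
    rw [mul_assoc, ← hwW' s hs]
  have heq : hammOp α β γ δ g f u = TT := by
    funext t
    rw [hcong t]
    rcases lt_or_ge t 0 with h0 | h0
    · have hc1 : (∫ s in (0:ℝ)..1, greenK α β γ δ t s * w s)
          = ∫ s in (0:ℝ)..1, ((β + α * t) / (γ * β + α * γ + α * δ)) * ((γ + δ - γ * s) * w s) := by
        refine integral_congr fun s hs => ?_
        rw [Set.uIcc_of_le (by norm_num : (0:ℝ) ≤ 1)] at hs
        unfold greenK
        rw [if_neg (by linarith [hs.1] : ¬ s ≤ t)]
        ring
      rw [hc1, intervalIntegral.integral_const_mul]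
      simp only [hTTdef]
      rw [hP0 t h0.le, hQ0 t h0.le]
      simp only [hQdef]
      ring
    · rcases le_or_gt t 1 with h1 | h1
      · have hsplit1 : IntervalIntegrable (fun s => greenK α β γ δ t s * w s) volume 0 t := by
          rw [intervalIntegrable_iff_integrableOn_Ioc_of_le h0]
          refine (((hψw.const_mul ((γ + δ - γ * t) / (γ * β + α * γ + α * δ))).integrableOn).congr_fun
            ?_ measurableSet_Ioc)
          intro s hs
          beta_reduce
          unfold greenK
          rw [if_pos hs.2]
          ring
        have hsplit2 : IntervalIntegrable (fun s => greenK α β γ δ t s * w s) volume t 1 := by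
          rw [intervalIntegrable_iff_integrableOn_Ioc_of_le h1]
          refine (((hφw.const_mul ((β + α * t) / (γ * β + α * γ + α * δ))).integrableOn).congr_fun
            ?_ measurableSet_Ioc)
          intro s hs
          beta_reduce
          unfold greenK
          rw [if_neg (not_le.mpr hs.1)]
          ring
        rw [← integral_add_adjacent_intervals hsplit1 hsplit2]
        have e1 : (∫ s in (0:ℝ)..t, greenK α β γ δ t s * w s)
            = ((γ + δ - γ * t) / (γ * β + α * γ + α * δ)) * P t := by
          simp only [hPdef]
          rw [← intervalIntegral.integral_const_mul]
          refine integral_congr fun s hs => ?_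
          rw [Set.uIcc_of_le h0] at hs
          unfold greenK
          rw [if_pos hs.2]
          ring
        have e2 : (∫ s in t..1, greenK α β γ δ t s * w s)
            = ((β + α * t) / (γ * β + α * γ + α * δ)) * (Q 1 - Q t) := by
          have hsub : Q 1 - Q t = ∫ s in t..1, (γ + δ - γ * s) * w s :=
            integral_interval_sub_left (hφw.intervalIntegrable) (hφw.intervalIntegrable)
          rw [hsub, ← intervalIntegral.integral_const_mul]
          refine integral_congr fun s hs => ?_
          rw [Set.uIcc_of_le h1] at hs
          unfold greenK
          rcases lt_or_eq_of_le hs.1 with h | h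
          · rw [if_neg (not_le.mpr h)]
            ring
          · subst h
            rw [if_pos le_rfl]
            ring
        rw [e1, e2]
        simp only [hTTdef]
        ring
      · have hc1 : (∫ s in (0:ℝ)..1, greenK α β γ δ t s * w s)
            = ∫ s in (0:ℝ)..1, ((γ + δ - γ * t) / (γ * β + α * γ + α * δ)) * ((β + α * s) * w s) := by
          refine integral_congr fun s hs => ?_
          rw [Set.uIcc_of_le (by norm_num : (0:ℝ) ≤ 1)] at hs
          unfold greenK
          rw [if_pos (by linarith [hs.2] : s ≤ t)]
          ring
        rw [hc1, intervalIntegral.integral_const_mul]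
        simp only [hTTdef]
        rw [hP1 t h1.le, hQ1 t h1.le]
        simp only [hPdef]
        ring
  have hIcc01 : Set.Ioc (0:ℝ) 1 ⊆ Set.Icc 0 1 := Set.Ioc_subset_Icc_self
  have hDeq : ∀ t ∈ Set.Icc (0:ℝ) 1, (∫ s in (0:ℝ)..1, greenKt α β γ δ t s * w s) = DD t := by
    intro t ht
    obtain ⟨h0, h1⟩ := ht
    have hsplit1 : IntervalIntegrable (fun s => greenKt α β γ δ t s * w s) volume 0 t := by
      rw [intervalIntegrable_iff_integrableOn_Ioc_of_le h0]
      refine Integrable.congr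
        ((hψw.const_mul ((-γ) / (γ * β + α * γ + α * δ))).integrableOn) ?_
      filter_upwards [ae_restrict_mem measurableSet_Ioc, ae_restrict_of_ae (hne t)]
        with s hs hsne
      beta_reduce
      unfold greenKt
      rw [if_pos (lt_of_le_of_ne hs.2 hsne)]
      ring
    have hsplit2 : IntervalIntegrable (fun s => greenKt α β γ δ t s * w s) volume t 1 := by
      rw [intervalIntegrable_iff_integrableOn_Ioc_of_le h1]
      refine (((hφw.const_mul (α / (γ * β + α * γ + α * δ))).integrableOn).congr_fun
        ?_ measurableSet_Ioc)
      intro s hs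
      beta_reduce
      unfold greenKt
      rw [if_neg (not_lt.mpr hs.1.le)]
      ring
    rw [← integral_add_adjacent_intervals hsplit1 hsplit2]
    have e1 : (∫ s in (0:ℝ)..t, greenKt α β γ δ t s * w s)
        = ((-γ) / (γ * β + α * γ + α * δ)) * P t := by
      simp only [hPdef]
      rw [← intervalIntegral.integral_const_mul]
      refine integral_congr_ae ?_
      filter_upwards [hne t] with s hsne hmem
      rw [Set.uIoc_of_le h0] at hmem
      unfold greenKt
      rw [if_pos (lt_of_le_of_ne hmem.2 hsne)]
      ring
    have e2 : (∫ s in t..1, greenKt α β γ δ t s * w s)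
        = (α / (γ * β + α * γ + α * δ)) * (Q 1 - Q t) := by
      have hsub : Q 1 - Q t = ∫ s in t..1, (γ + δ - γ * s) * w s :=
        integral_interval_sub_left (hφw.intervalIntegrable) (hφw.intervalIntegrable)
      rw [hsub, ← intervalIntegral.integral_const_mul]
      refine integral_congr fun s hs => ?_
      rw [Set.uIcc_of_le h1] at hs
      unfold greenKt
      rw [if_neg (not_lt.mpr hs.1)]
      ring
    rw [e1, e2]
    simp only [hDDdef]
    ring
  have hgoal1 : ∀ t ∈ Set.Icc (0:ℝ) 1,
      IntervalIntegrable (fun s => greenK α β γ δ t s * g s * f s (u s)) volume 0 1 := by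
    intro t ht
    rw [intervalIntegrable_iff_integrableOn_Ioc_of_le zero_le_one]
    have hW' : IntegrableOn (fun s => g s * f s (u s)) (Set.Ioc (0:ℝ) 1) :=
      hWdef ▸ (hWint.mono_set hIcc01)
    have h5 : IntegrableOn (fun s => greenK α β γ δ t s * (g s * f s (u s)))
        (Set.Ioc (0:ℝ) 1) := by
      refine Integrable.bdd_mul (c := (γ + δ) * (β + α) / (γ * β + α * γ + α * δ)) hW'
        ((greenK_measurable α β γ δ t).aestronglyMeasurable) ?_
      filter_upwards [ae_restrict_mem measurableSet_Ioc] with s hs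
      rw [Real.norm_eq_abs, abs_of_nonneg (greenK_nonneg hα hβ hγ hδ hΓ ht (hIcc01 hs))]
      exact greenK_le hα hβ hγ hδ hΓ ht (hIcc01 hs)
    simpa [mul_assoc] using h5
  have hgabs : IntegrableOn (fun s => |g s|) (Set.Icc (0:ℝ) 1) := hg.abs
  have hgabsII : IntervalIntegrable (fun s => |g s|) volume 0 1 :=
    (intervalIntegrable_iff_integrableOn_Ioc_of_le zero_le_one).mpr (hgabs.mono_set hIcc01)
  have hkgII : ∀ t ∈ Set.Icc (0:ℝ) 1,
      IntervalIntegrable (fun s => greenK α β γ δ t s * |g s|) volume 0 1 := by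
    intro t ht
    rw [intervalIntegrable_iff_integrableOn_Ioc_of_le zero_le_one]
    refine Integrable.bdd_mul (c := (γ + δ) * (β + α) / (γ * β + α * γ + α * δ))
      (hgabs.mono_set hIcc01) ((greenK_measurable α β γ δ t).aestronglyMeasurable) ?_
    filter_upwards [ae_restrict_mem measurableSet_Ioc] with s hs
    rw [Real.norm_eq_abs, abs_of_nonneg (greenK_nonneg hα hβ hγ hδ hΓ ht (hIcc01 hs))]
    exact greenK_le hα hβ hγ hδ hΓ ht (hIcc01 hs)
  have hktgII : ∀ t ∈ Set.Icc (0:ℝ) 1,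
      IntervalIntegrable (fun s => |greenKt α β γ δ t s| * |g s|) volume 0 1 := by
    intro t ht
    rw [intervalIntegrable_iff_integrableOn_Ioc_of_le zero_le_one]
    refine Integrable.bdd_mul (c := (γ * (β + α) + α * (γ + δ)) / (γ * β + α * γ + α * δ))
      (hgabs.mono_set hIcc01) (((greenKt_measurable α β γ δ t).abs).aestronglyMeasurable) ?_
    filter_upwards [ae_restrict_mem measurableSet_Ioc] with s hs
    rw [Real.norm_eq_abs, abs_abs]
    exact greenKt_abs_le hα hβ hγ hδ hΓ ht (hIcc01 hs)
  have hbddM1 : BddAbove (Set.range fun t : Set.Icc (0:ℝ) 1 =>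
      ∫ s in (0:ℝ)..1, greenK α β γ δ t s * |g s|) := by
    refine ⟨((γ + δ) * (β + α) / (γ * β + α * γ + α * δ)) * ∫ s in (0:ℝ)..1, |g s|, ?_⟩
    rintro x ⟨t, rfl⟩
    rw [← intervalIntegral.integral_const_mul]
    refine integral_mono_on zero_le_one (hkgII t t.2) (hgabsII.const_mul _) fun s hs => ?_
    exact mul_le_mul_of_nonneg_right (greenK_le hα hβ hγ hδ hΓ t.2 hs) (abs_nonneg _)
  have hbddM2 : BddAbove (Set.range fun t : Set.Icc (0:ℝ) 1 =>
      ∫ s in (0:ℝ)..1, |greenKt α β γ δ t s| * |g s|) := by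
    refine ⟨((γ * (β + α) + α * (γ + δ)) / (γ * β + α * γ + α * δ)) * ∫ s in (0:ℝ)..1, |g s|, ?_⟩
    rintro x ⟨t, rfl⟩
    rw [← intervalIntegral.integral_const_mul]
    refine integral_mono_on zero_le_one (hktgII t t.2) (hgabsII.const_mul _) fun s hs => ?_
    exact mul_le_mul_of_nonneg_right (greenKt_abs_le hα hβ hγ hδ hΓ t.2 hs) (abs_nonneg _)
  have hM1le : ∀ t (ht : t ∈ Set.Icc (0:ℝ) 1),
      (∫ s in (0:ℝ)..1, greenK α β γ δ t s * |g s|) ≤ Mone α β γ δ g := by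
    intro t ht
    unfold Mone
    exact le_ciSup hbddM1 (⟨t, ht⟩ : Set.Icc (0:ℝ) 1)
  have hM2le : ∀ t (ht : t ∈ Set.Icc (0:ℝ) 1),
      (∫ s in (0:ℝ)..1, |greenKt α β γ δ t s| * |g s|) ≤ Mtwo α β γ δ g := by
    intro t ht
    unfold Mtwo
    exact le_ciSup hbddM2 (⟨t, ht⟩ : Set.Icc (0:ℝ) 1)
  have haeIoc : ∀ᵐ s ∂(volume.restrict (Set.Ioc (0:ℝ) 1)), ‖W s‖ ≤ CH * |g s| :=
    ae_restrict_of_ae_restrict_of_subset hIcc01 hae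
  have hTb : ∀ t ∈ Set.Icc (0:ℝ) 1, |TT t| ≤ CH * Mone α β γ δ g := by
    intro t ht
    have h1 : TT t = ∫ s in (0:ℝ)..1, greenK α β γ δ t s * w s := by
      rw [← heq]
      exact hcong t
    rw [h1, ← Real.norm_eq_abs]
    calc ‖∫ s in (0:ℝ)..1, greenK α β γ δ t s * w s‖
        ≤ |(∫ s in (0:ℝ)..1, CH * (greenK α β γ δ t s * |g s|))| := by
          refine norm_integral_le_abs_of_norm_le ?_ ((hkgII t ht).const_mul CH)
          rw [Set.uIoc_of_le zero_le_one]
          filter_upwards [haeIoc, ae_restrict_mem measurableSet_Ioc] with s h1 h2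
          rw [Real.norm_eq_abs, abs_mul,
            abs_of_nonneg (greenK_nonneg hα hβ hγ hδ hΓ ht (hIcc01 h2))]
          rw [hwW s (hIcc01 h2)]
          rw [Real.norm_eq_abs] at h1
          calc greenK α β γ δ t s * |W s| ≤ greenK α β γ δ t s * (CH * |g s|) :=
                mul_le_mul_of_nonneg_left h1 (greenK_nonneg hα hβ hγ hδ hΓ ht (hIcc01 h2))
            _ = CH * (greenK α β γ δ t s * |g s|) := by ring
      _ = CH * |(∫ s in (0:ℝ)..1, greenK α β γ δ t s * |g s|)| := by
          rw [intervalIntegral.integral_const_mul, abs_mul, abs_of_nonneg hCH0]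
      _ = CH * (∫ s in (0:ℝ)..1, greenK α β γ δ t s * |g s|) := by
          rw [abs_of_nonneg (integral_nonneg zero_le_one fun s hs =>
            mul_nonneg (greenK_nonneg hα hβ hγ hδ hΓ ht hs) (abs_nonneg _))]
      _ ≤ CH * Mone α β γ δ g := mul_le_mul_of_nonneg_left (hM1le t ht) hCH0
  have hDb : ∀ t ∈ Set.Icc (0:ℝ) 1, |DD t| ≤ CH * Mtwo α β γ δ g := by
    intro t ht
    rw [← hDeq t ht, ← Real.norm_eq_abs]
    calc ‖∫ s in (0:ℝ)..1, greenKt α β γ δ t s * w s‖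
        ≤ |(∫ s in (0:ℝ)..1, CH * (|greenKt α β γ δ t s| * |g s|))| := by
          refine norm_integral_le_abs_of_norm_le ?_ ((hktgII t ht).const_mul CH)
          rw [Set.uIoc_of_le zero_le_one]
          filter_upwards [haeIoc, ae_restrict_mem measurableSet_Ioc] with s h1 h2
          rw [Real.norm_eq_abs, abs_mul]
          rw [hwW s (hIcc01 h2)]
          rw [Real.norm_eq_abs] at h1
          calc |greenKt α β γ δ t s| * |W s| ≤ |greenKt α β γ δ t s| * (CH * |g s|) :=
                mul_le_mul_of_nonneg_left h1 (abs_nonneg _)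
            _ = CH * (|greenKt α β γ δ t s| * |g s|) := by ring
      _ = CH * |(∫ s in (0:ℝ)..1, |greenKt α β γ δ t s| * |g s|)| := by
          rw [intervalIntegral.integral_const_mul, abs_mul, abs_of_nonneg hCH0]
      _ = CH * (∫ s in (0:ℝ)..1, |greenKt α β γ δ t s| * |g s|) := by
          rw [abs_of_nonneg (integral_nonneg zero_le_one fun s hs =>
            mul_nonneg (abs_nonneg _) (abs_nonneg _))]
      _ ≤ CH * Mtwo α β γ δ g := mul_le_mul_of_nonneg_left (hM2le t ht) hCH0
  refine ⟨hgoal1, ?_⟩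
  rw [heq]
  refine ⟨hTTc.continuousOn, fun t _ => (hder t).differentiableAt, ?_, ?_⟩
  · rw [hderiv_eq]
    exact hDDc.continuousOn
  · unfold normC1
    rw [hderiv_eq]
    have b1 : sSup ((fun t => |TT t|) '' Set.Icc (0:ℝ) 1) ≤ CH * Mone α β γ δ g := by
      refine csSup_le ((Set.nonempty_Icc.mpr (by norm_num)).image _) ?_
      rintro x ⟨t, ht, rfl⟩
      exact hTb t ht
    have b2 : sSup ((fun t => |DD t|) '' Set.Icc (0:ℝ) 1) ≤ CH * Mtwo α β γ δ g := by
      refine csSup_le ((Set.nonempty_Icc.mpr (by norm_num)).image _) ?_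
      rintro x ⟨t, ht, rfl⟩
      exact hDb t ht
    rw [mul_add] at hRC
    linarith
end

section
/- Let λ ∈ (0,1), g(t) = 1/√t, and f(t,u) = −φ^λ(n(t,u)) with n(t,u) and φ as in the example. For each k ≥ 1 the curves γ_k(t) = k√t and γ̂_k(t) = −t/(k+1) are inviable discontinuity curves for the equation u'' + g(t)f(t,u) = 0 on any [a,b] ⊆ (0,1]: there exists ψ ∈ L¹ nonnegative and ε > 0 with −γ''(t) − ψ(t) > g(t)f(t,y) for a.e. t and all y with |y − γ(t)| ≤ ε. In particular, −γ_k''(t) = k/(4t^{3/2}) > 0 and −γ̂_k''(t) = 0, while g(t)f(t,y) ≤ −2^λ/√t ≤ −2^λ for all relevant y. -/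
open MeasureTheory

/-- `φ(1) = 2` and, for `n ≥ 2`, `φ(n)` is the number of divisors of `n`. -/
def phiFun (n : ℕ) : ℕ := if n = 1 then 2 else n.divisors.card

/-- The piecewise index function `n(t,u)` of the example:
`n(t,u) = 1` if `u < -t`; `n(t,u) = n` if `-t/n ≤ u < -t/(n+1)` and `-t ≤ u < 0`
(equivalently `n = ⌊t/(-u)⌋`); and `n(t,u) = n` if `(n-1)√t ≤ u < n√t` and
`u ≥ 0` (equivalently `n = ⌊u/√t⌋ + 1`). -/
noncomputable def nFun (t u : ℝ) : ℕ :=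
  if u < -t then 1
  else if u < 0 then ⌊t / (-u)⌋₊
  else ⌊u / Real.sqrt t⌋₊ + 1


lemma nFun_pos (t u : ℝ) (ht : 0 < t) : 1 ≤ nFun t u := by
  unfold nFun
  split_ifs with h1 h2
  · exact le_refl 1
  · have hu : 0 < -u := by linarith
    have : (1 : ℝ) ≤ t / (-u) := by
      rw [le_div_iff₀ hu]; linarith [not_lt.mp h1]
    exact Nat.le_floor (by exact_mod_cast this)
  · omega

lemma two_le_phi (n : ℕ) (hn : 1 ≤ n) : 2 ≤ phiFun n := by
  unfold phiFun
  split_ifs with h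
  · exact le_refl 2
  · have hn2 : 2 ≤ n := by omega
    have h1 : (1 : ℕ) ∈ n.divisors := Nat.one_mem_divisors.mpr (by omega)
    have h2 : n ∈ n.divisors := Nat.mem_divisors_self n (by omega)
    exact Finset.one_lt_card.mpr ⟨1, h1, n, h2, by omega⟩

lemma gf_bound (lam : ℝ) (hlam : lam ∈ Set.Ioo (0 : ℝ) 1)
    (g : ℝ → ℝ) (hg : ∀ t, g t = 1 / Real.sqrt t)
    (f : ℝ → ℝ → ℝ) (hf : ∀ t u, f t u = -((phiFun (nFun t u) : ℝ) ^ lam))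
    (t : ℝ) (ht : 0 < t) (ht1 : t ≤ 1) (y : ℝ) :
    g t * f t y ≤ -((2 : ℝ) ^ lam) / Real.sqrt t ∧
      -((2 : ℝ) ^ lam) / Real.sqrt t ≤ -((2 : ℝ) ^ lam) := by
  have hs : 0 < Real.sqrt t := Real.sqrt_pos.mpr ht
  have hs1 : Real.sqrt t ≤ 1 := by
    rw [show (1:ℝ) = Real.sqrt 1 by simp]
    exact Real.sqrt_le_sqrt ht1
  have hphi : (2 : ℝ) ≤ (phiFun (nFun t y) : ℝ) := by
    exact_mod_cast two_le_phi _ (nFun_pos t y ht)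
  have hpow : (2 : ℝ) ^ lam ≤ (phiFun (nFun t y) : ℝ) ^ lam :=
    Real.rpow_le_rpow (by norm_num) hphi hlam.1.le
  have hpow0 : (0 : ℝ) < (2 : ℝ) ^ lam := Real.rpow_pos_of_pos (by norm_num) _
  constructor
  · rw [hg, hf]
    rw [div_mul_eq_mul_div, one_mul, neg_div, neg_div]
    apply neg_le_neg
    gcongr
  · rw [neg_div, neg_le_neg_iff]
    rw [le_div_iff₀ hs]
    nlinarith

theorem example_curves_inviable
    (lam : ℝ) (hlam : lam ∈ Set.Ioo (0 : ℝ) 1)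
    (g : ℝ → ℝ) (hg : ∀ t, g t = 1 / Real.sqrt t)
    (f : ℝ → ℝ → ℝ) (hf : ∀ t u, f t u = -((phiFun (nFun t u) : ℝ) ^ lam))
    (k : ℕ) (hk : 1 ≤ k)
    (a b : ℝ) (ha : 0 < a) (hab : a ≤ b) (hb : b ≤ 1) :
    -- derivative facts: `γ_k(t) = k√t` has `γ_k'(t) = k/(2√t)` and
    -- `-γ_k''(t) = k/(4 t^{3/2}) > 0`; `γ̂_k(t) = -t/(k+1)` has `γ̂_k'' = 0`
    (∀ t ∈ Set.Icc a b,
      HasDerivAt (fun x => (k : ℝ) * Real.sqrt x) ((k : ℝ) / (2 * Real.sqrt t)) t ∧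
      HasDerivAt (fun x => (k : ℝ) / (2 * Real.sqrt x))
        (-((k : ℝ) / (4 * t ^ ((3 : ℝ) / 2)))) t ∧
      0 < (k : ℝ) / (4 * t ^ ((3 : ℝ) / 2)) ∧
      HasDerivAt (fun x => -x / ((k : ℝ) + 1)) (-1 / ((k : ℝ) + 1)) t ∧
      HasDerivAt (fun _ : ℝ => -1 / ((k : ℝ) + 1)) 0 t) ∧
    -- the uniform bound `g(t) f(t,y) ≤ -2^λ/√t ≤ -2^λ`
    (∀ t ∈ Set.Icc a b, ∀ y : ℝ,
      g t * f t y ≤ -((2 : ℝ) ^ lam) / Real.sqrt t ∧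
      -((2 : ℝ) ^ lam) / Real.sqrt t ≤ -((2 : ℝ) ^ lam)) ∧
    -- inviability of `γ_k(t) = k√t`
    (∃ ψ : ℝ → ℝ, IntegrableOn ψ (Set.Icc a b) ∧ (∀ t, 0 ≤ ψ t) ∧
      ∃ ε > (0 : ℝ), ∀ᵐ t ∂(volume.restrict (Set.Icc a b)),
        ∀ y : ℝ, |y - (k : ℝ) * Real.sqrt t| ≤ ε →
          (k : ℝ) / (4 * t ^ ((3 : ℝ) / 2)) - ψ t > g t * f t y) ∧
    -- inviability of `γ̂_k(t) = -t/(k+1)`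
    (∃ ψ : ℝ → ℝ, IntegrableOn ψ (Set.Icc a b) ∧ (∀ t, 0 ≤ ψ t) ∧
      ∃ ε > (0 : ℝ), ∀ᵐ t ∂(volume.restrict (Set.Icc a b)),
        ∀ y : ℝ, |y - (-t / ((k : ℝ) + 1))| ≤ ε →
          (0 : ℝ) - ψ t > g t * f t y) := by
  have hderiv : ∀ t ∈ Set.Icc a b,
      HasDerivAt (fun x => (k : ℝ) * Real.sqrt x) ((k : ℝ) / (2 * Real.sqrt t)) t ∧
      HasDerivAt (fun x => (k : ℝ) / (2 * Real.sqrt x))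
        (-((k : ℝ) / (4 * t ^ ((3 : ℝ) / 2)))) t ∧
      0 < (k : ℝ) / (4 * t ^ ((3 : ℝ) / 2)) ∧
      HasDerivAt (fun x => -x / ((k : ℝ) + 1)) (-1 / ((k : ℝ) + 1)) t ∧
      HasDerivAt (fun _ : ℝ => -1 / ((k : ℝ) + 1)) 0 t := by
    intro t htm
    have ht : 0 < t := lt_of_lt_of_le ha htm.1
    have hs : 0 < Real.sqrt t := Real.sqrt_pos.mpr ht
    have hsq : Real.sqrt t ^ 2 = t := Real.sq_sqrt ht.le
    have h32 : t ^ ((3 : ℝ) / 2) = t * Real.sqrt t := by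
      rw [show (3:ℝ)/2 = 1 + 1/2 by ring, Real.rpow_add ht, Real.rpow_one,
        Real.sqrt_eq_rpow]
    have hsder : HasDerivAt Real.sqrt (1 / (2 * Real.sqrt t)) t :=
      Real.hasDerivAt_sqrt ht.ne'
    refine ⟨?_, ?_, ?_, ?_, ?_⟩
    · have := hsder.const_mul (k : ℝ)
      rw [show (k : ℝ) / (2 * Real.sqrt t) = (k : ℝ) * (1 / (2 * Real.sqrt t)) by ring]
      exact this
    · have h1 : HasDerivAt (fun x => (Real.sqrt x)⁻¹)
          (-(1 / (2 * Real.sqrt t)) / (Real.sqrt t) ^ 2) t := hsder.inv hs.ne'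
      have h2 := h1.const_mul ((k : ℝ) / 2)
      have heq : (fun x => (k : ℝ) / (2 * Real.sqrt x))
          = fun x => (k : ℝ) / 2 * (Real.sqrt x)⁻¹ := by
        funext x; ring
      rw [heq]
      have e : -((k : ℝ) / (4 * t ^ ((3 : ℝ) / 2)))
          = (k : ℝ) / 2 * (-(1 / (2 * Real.sqrt t)) / (Real.sqrt t) ^ 2) := by
        rw [hsq, h32]
        field_simp
        ring
      rw [e]
      exact h2
    · have h32p : (0 : ℝ) < t ^ ((3 : ℝ) / 2) := Real.rpow_pos_of_pos ht _
      have hkp : (0 : ℝ) < (k : ℝ) := by exact_mod_cast hk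
      positivity
    · have := ((hasDerivAt_id t).neg).div_const ((k : ℝ) + 1)
      exact this
    · exact hasDerivAt_const t _
  have hbound : ∀ t ∈ Set.Icc a b, ∀ y : ℝ,
      g t * f t y ≤ -((2 : ℝ) ^ lam) / Real.sqrt t ∧
      -((2 : ℝ) ^ lam) / Real.sqrt t ≤ -((2 : ℝ) ^ lam) := by
    intro t htm y
    exact gf_bound lam hlam g hg f hf t (lt_of_lt_of_le ha htm.1)
      (le_trans htm.2 hb) y
  have hpow0 : (0 : ℝ) < (2 : ℝ) ^ lam := Real.rpow_pos_of_pos (by norm_num) _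
  have hneg : ∀ t ∈ Set.Icc a b, ∀ y : ℝ, g t * f t y ≤ -((2 : ℝ) ^ lam) := by
    intro t htm y
    exact le_trans (hbound t htm y).1 (hbound t htm y).2
  refine ⟨hderiv, hbound, ?_, ?_⟩
  · refine ⟨fun _ => 0, integrableOn_zero, fun _ => le_refl 0, 1, one_pos, ?_⟩
    filter_upwards [ae_restrict_mem measurableSet_Icc] with t htm y _
    have h1 := (hderiv t htm).2.2.1
    have h2 := hneg t htm y
    linarith
  · refine ⟨fun _ => 0, integrableOn_zero, fun _ => le_refl 0, 1, one_pos, ?_⟩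
    filter_upwards [ae_restrict_mem measurableSet_Icc] with t htm y _
    have h2 := hneg t htm y
    linarith
end
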